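/- Let T₁ ∈ B(H₁) with ‖T₁‖ < 1 and let T₂ ∈ B(H₂) be polynomially bounded. Then for every bounded operator X : H₂ → H₁, the upper triangular block operator R = [[T₁, X],[0, T₂]] on H₁ ⊕ H₂ is polynomially bounded; moreover for p = Σ_{k=0}^d a_k z^k, the off-diagonal block of p(R) equals δ_X(p) = Σ_{j=0}^{d-1} T₁^j X Π_j(T₂) where Π_j(z) = Σ_{k=j+1}^d a_k z^{k-1-j}, and ‖δ_X(p)‖ ≤ (Σ_{j=0}^∞ (1 + log(j+1)) ‖T₁‖^j) C₂ M ‖X‖ ‖p‖_∞ for suitable constants C₂, M. -/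

import Mathlib

open Polynomial Finset Metric

/-- An operator `T` is polynomially bounded if `‖p(T)‖ ≤ C ‖p‖_∞` for all polynomials. -/
def PolynomiallyBounded {E : Type*} [NormedAddCommGroup E] [NormedSpace ℂ E]
    (T : E →L[ℂ] E) : Prop :=
  ∃ C > (0 : ℝ), ∀ (p : Polynomial ℂ) (B : ℝ),
    (∀ z : ℂ, ‖z‖ ≤ 1 → ‖Polynomial.eval z p‖ ≤ B) →
    ‖(Polynomial.aeval T p : E →L[ℂ] E)‖ ≤ C * B

/-- Cauchy-type coefficient bound, proved by averaging over roots of unity. -/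
lemma coeff_norm_le_aux (p : Polynomial ℂ) (B : ℝ)
    (hB : ∀ z : ℂ, ‖z‖ ≤ 1 → ‖p.eval z‖ ≤ B) (k : ℕ) : ‖p.coeff k‖ ≤ B := by
  have hB0 : 0 ≤ B := (norm_nonneg _).trans (hB 0 (by simp))
  by_cases hk : p.natDegree < k
  · simp [Polynomial.coeff_eq_zero_of_natDegree_lt hk, hB0]
  push_neg at hk
  set d := p.natDegree with hd
  set N := d + 1 with hN
  have hNpos : 0 < N := Nat.succ_pos _
  set ζ : ℂ := Complex.exp (2 * Real.pi * Complex.I / N) with hζdef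
  have hζ : IsPrimitiveRoot ζ N := Complex.isPrimitiveRoot_exp N hNpos.ne'
  have hζnorm : ‖ζ‖ = 1 := by
    rw [hζdef, Complex.norm_exp]
    have : (2 * Real.pi * Complex.I / N).re = 0 := by
      simp [Complex.div_re, Complex.mul_re]
    rw [this, Real.exp_zero]
  have geom : ∀ x : ℂ, x ^ N = 1 → ∑ i ∈ range N, x ^ i = if x = 1 then (N : ℂ) else 0 := by
    intro x hx
    split_ifs with h
    · simp [h]
    · rw [geom_sum_eq h, hx]; simp
  have cond : ∀ m, m < N → ((ζ ^ (m + k * d) = 1) ↔ m = k) := by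
    intro m hm
    rw [hζ.pow_eq_one_iff_dvd]
    constructor
    · intro h
      have h1 : (m + k * d) ≡ 0 [MOD N] := (Nat.modEq_zero_iff_dvd).mpr h
      have h2 : (k + k * d) ≡ 0 [MOD N] := (Nat.modEq_zero_iff_dvd).mpr ⟨k, by ring⟩
      exact (Nat.ModEq.add_right_cancel' (k * d) (h1.trans h2.symm)).eq_of_lt_of_lt hm
        (by omega)
    · rintro rfl
      exact ⟨m, by ring⟩
  have key : ∑ i ∈ range N, p.eval (ζ ^ i) * (ζ ^ (k * d)) ^ i = (N : ℂ) * p.coeff k := by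
    have expand : ∀ i : ℕ, p.eval (ζ ^ i) * (ζ ^ (k * d)) ^ i
        = ∑ m ∈ range N, p.coeff m * (ζ ^ (m + k * d)) ^ i := by
      intro i
      rw [Polynomial.eval_eq_sum_range, Finset.sum_mul]
      refine Finset.sum_congr rfl fun m _ => ?_
      rw [mul_assoc]
      congr 1
      rw [← pow_mul, ← pow_mul, ← pow_add, ← pow_mul]
      ring_nf
    calc ∑ i ∈ range N, p.eval (ζ ^ i) * (ζ ^ (k * d)) ^ i
        = ∑ i ∈ range N, ∑ m ∈ range N, p.coeff m * (ζ ^ (m + k * d)) ^ i := by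
          exact Finset.sum_congr rfl fun i _ => expand i
      _ = ∑ m ∈ range N, p.coeff m * ∑ i ∈ range N, (ζ ^ (m + k * d)) ^ i := by
          rw [Finset.sum_comm]
          exact Finset.sum_congr rfl fun m _ => by rw [Finset.mul_sum]
      _ = ∑ m ∈ range N, p.coeff m * (if ζ ^ (m + k * d) = 1 then (N : ℂ) else 0) := by
          refine Finset.sum_congr rfl fun m _ => ?_
          rw [geom _ (by rw [← pow_mul, mul_comm, pow_mul, hζ.pow_eq_one, one_pow])]
      _ = ∑ m ∈ range N, (if m = k then p.coeff m * N else 0) := by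
          refine Finset.sum_congr rfl fun m hm => ?_
          simp only [mul_ite, mul_zero]
          rw [if_congr (cond m (Finset.mem_range.mp hm)) rfl rfl]
      _ = (N : ℂ) * p.coeff k := by
          rw [Finset.sum_ite_eq' (range N) k]
          rw [if_pos (Finset.mem_range.mpr (Nat.lt_succ_of_le hk)), mul_comm]
  have hnorm : ‖(N : ℂ) * p.coeff k‖ ≤ N * B := by
    rw [← key]
    refine (norm_sum_le _ _).trans ?_
    have : ∀ i ∈ range N, ‖p.eval (ζ ^ i) * (ζ ^ (k * d)) ^ i‖ ≤ B := by
      intro i _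
      rw [norm_mul]
      have h1 : ‖(ζ ^ (k * d)) ^ i‖ = 1 := by
        rw [norm_pow, norm_pow, hζnorm, one_pow, one_pow]
      rw [h1, mul_one]
      exact hB _ (by rw [norm_pow, hζnorm, one_pow])
    refine (Finset.sum_le_sum this).trans ?_
    simp [Finset.sum_const, Finset.card_range]
  rw [norm_mul, Complex.norm_natCast] at hnorm
  have hNR : (0 : ℝ) < N := by exact_mod_cast hNpos
  exact (mul_le_mul_iff_right₀ hNR).mp hnorm

/-- Bound for the polynomial `Π_j` on the closed unit disc. -/
lemma Pi_eval_bound (p : Polynomial ℂ) (B : ℝ)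
    (hB : ∀ z : ℂ, ‖z‖ ≤ 1 → ‖p.eval z‖ ≤ B) (j : ℕ) (hj : j ≤ p.natDegree) :
    ∀ z : ℂ, ‖z‖ ≤ 1 →
      ‖(∑ k ∈ Finset.Icc (j + 1) p.natDegree,
          Polynomial.C (p.coeff k) * Polynomial.X ^ (k - 1 - j)).eval z‖ ≤ ((j : ℝ) + 2) * B := by
  set d := p.natDegree with hd
  set q : Polynomial ℂ := ∑ k ∈ Finset.Icc (j + 1) d,
    Polynomial.C (p.coeff k) * Polynomial.X ^ (k - 1 - j) with hq
  have sphere_bound : ∀ z : ℂ, ‖z‖ = 1 → ‖q.eval z‖ ≤ ((j : ℝ) + 2) * B := by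
    intro z hz
    have hident : z ^ (j + 1) * q.eval z
        = p.eval z - ∑ k ∈ Finset.range (j + 1), p.coeff k * z ^ k := by
      have hsplit : Finset.Icc (j + 1) d = Finset.range (d + 1) \ Finset.range (j + 1) := by
        ext m; simp only [Finset.mem_Icc, Finset.mem_sdiff, Finset.mem_range]; omega
      have hevalq : q.eval z = ∑ k ∈ Finset.Icc (j + 1) d, p.coeff k * z ^ (k - 1 - j) := by
        rw [hq]
        simp [Polynomial.eval_finset_sum]
      rw [hevalq, Finset.mul_sum]
      have hterm : ∀ k ∈ Finset.Icc (j + 1) d,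
          z ^ (j + 1) * (p.coeff k * z ^ (k - 1 - j)) = p.coeff k * z ^ k := by
        intro k hk
        have hk' := Finset.mem_Icc.mp hk
        rw [mul_comm (z ^ (j + 1)), mul_assoc, ← pow_add]
        congr 2
        omega
      rw [Finset.sum_congr rfl hterm, hsplit, Finset.sum_sdiff_eq_sub
        (by intro m hm; simp only [Finset.mem_range] at *; omega)]
      congr 1
      exact (Polynomial.eval_eq_sum_range z).symm
    have h1 : ‖q.eval z‖ = ‖z ^ (j + 1) * q.eval z‖ := by
      rw [norm_mul, norm_pow, hz, one_pow, one_mul]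
    rw [h1, hident]
    refine (norm_sub_le _ _).trans ?_
    have h2 : ‖∑ k ∈ Finset.range (j + 1), p.coeff k * z ^ k‖ ≤ ((j : ℝ) + 1) * B := by
      refine (norm_sum_le _ _).trans ?_
      have : ∀ k ∈ Finset.range (j + 1), ‖p.coeff k * z ^ k‖ ≤ B := by
        intro k _
        rw [norm_mul, norm_pow, hz, one_pow, mul_one]
        exact coeff_norm_le_aux p B hB k
      refine (Finset.sum_le_sum this).trans ?_
      rw [Finset.sum_const, Finset.card_range, nsmul_eq_mul]
      exact le_of_eq (by push_cast; ring)
    have h3 : ‖p.eval z‖ ≤ B := hB z hz.le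
    nlinarith [h2, h3]
  intro z hz
  exact Complex.norm_le_of_forall_mem_frontier_norm_le (f := fun w : ℂ => q.eval w)
    (U := Metric.ball (0 : ℂ) 1) isBounded_ball
    (q.differentiable.diffContOnCl)
    (by
      intro w hw
      rw [frontier_ball (0 : ℂ) one_ne_zero] at hw
      exact sphere_bound w (mem_sphere_zero_iff_norm.mp hw))
    (by rw [closure_ball (0 : ℂ) one_ne_zero]; exact mem_closedBall_zero_iff.mpr hz)

lemma summ_aux {r : ℝ} (h0 : 0 ≤ r) (h1 : r < 1) :
    Summable (fun j : ℕ => ((j : ℝ) + 2) * r ^ j) := by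
  have h2 : Summable (fun j : ℕ => (j : ℝ) ^ 1 * r ^ j) :=
    summable_pow_mul_geometric_of_norm_lt_one 1 (by rwa [Real.norm_eq_abs, abs_of_nonneg h0])
  have h3 : Summable (fun j : ℕ => 2 * r ^ j) :=
    (summable_geometric_of_lt_one h0 h1).mul_left 2
  exact (h2.add h3).congr fun j => by ring

lemma pow_opNorm_le {E : Type*} [NormedAddCommGroup E] [NormedSpace ℂ E]
    (T : E →L[ℂ] E) (j : ℕ) : ‖T ^ j‖ ≤ ‖T‖ ^ j := by
  cases j with
  | zero => simpa [ContinuousLinearMap.one_def] using ContinuousLinearMap.norm_id_le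
  | succ n => exact norm_pow_le' T n.succ_pos

section Struct
variable {H₁ H₂ : Type*}
    [NormedAddCommGroup H₁] [NormedSpace ℂ H₁]
    [NormedAddCommGroup H₂] [NormedSpace ℂ H₂]
    (T₁ : H₁ →L[ℂ] H₁) (T₂ : H₂ →L[ℂ] H₂) (X : H₂ →L[ℂ] H₁)

/-- The block operator `R = [[T₁, X],[0,T₂]]`. -/
noncomputable def Rop : (H₁ × H₂) →L[ℂ] (H₁ × H₂) :=
  ((T₁.comp (ContinuousLinearMap.fst ℂ H₁ H₂) +
      X.comp (ContinuousLinearMap.snd ℂ H₁ H₂))).prod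
    (T₂.comp (ContinuousLinearMap.snd ℂ H₁ H₂))

lemma Rop_apply (v : H₁ × H₂) : Rop T₁ T₂ X v = (T₁ v.1 + X v.2, T₂ v.2) := rfl

/-- The off-diagonal block of `p(R)`. -/
noncomputable def deltaOp (p : Polynomial ℂ) : H₂ →L[ℂ] H₁ :=
  (ContinuousLinearMap.fst ℂ H₁ H₂).comp
    ((aeval (Rop T₁ T₂ X) p).comp (ContinuousLinearMap.inr ℂ H₁ H₂))

lemma deltaOp_apply (p : Polynomial ℂ) (y : H₂) :
    deltaOp T₁ T₂ X p y = ((aeval (Rop T₁ T₂ X) p) (0, y)).1 := rfl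

lemma deltaOp_add (p q : Polynomial ℂ) :
    deltaOp T₁ T₂ X (p + q) = deltaOp T₁ T₂ X p + deltaOp T₁ T₂ X q := by
  ext y; simp [deltaOp_apply, map_add]

lemma deltaOp_smul (a : ℂ) (p : Polynomial ℂ) :
    deltaOp T₁ T₂ X (a • p) = a • deltaOp T₁ T₂ X p := by
  ext y; simp [deltaOp_apply, map_smul]

/-- `deltaOp` as a linear map in `p`. -/
noncomputable def deltaLin : Polynomial ℂ →ₗ[ℂ] (H₂ →L[ℂ] H₁) where
  toFun := deltaOp T₁ T₂ X
  map_add' := deltaOp_add T₁ T₂ X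
  map_smul' := deltaOp_smul T₁ T₂ X

lemma Rop_pow_apply (n : ℕ) (v : H₁ × H₂) :
    (Rop T₁ T₂ X ^ n) v
      = ((T₁ ^ n) v.1 + deltaOp T₁ T₂ X (Polynomial.X ^ n) v.2, (T₂ ^ n) v.2) := by
  induction n generalizing v with
  | zero =>
    refine Prod.ext ?_ ?_ <;>
      simp [deltaOp_apply]
  | succ n ih =>
    have h1 : (Rop T₁ T₂ X ^ (n + 1)) v = (Rop T₁ T₂ X ^ n) (Rop T₁ T₂ X v) := by
      rw [pow_succ, ContinuousLinearMap.mul_apply]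
    have h2 : deltaOp T₁ T₂ X (Polynomial.X ^ (n + 1)) v.2
        = ((Rop T₁ T₂ X ^ n) (X v.2, T₂ v.2)).1 := by
      rw [deltaOp_apply, Polynomial.aeval_X_pow, pow_succ,
        ContinuousLinearMap.mul_apply, Rop_apply]
      simp
    rw [h1, Rop_apply, ih, h2, ih]
    refine Prod.ext ?_ ?_
    · simp only [map_add, pow_succ, ContinuousLinearMap.mul_apply]
      abel
    · simp [pow_succ, ContinuousLinearMap.mul_apply]

lemma aeval_Rop_apply (p : Polynomial ℂ) (v : H₁ × H₂) :
    (aeval (Rop T₁ T₂ X) p) v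
      = ((aeval T₁ p) v.1 + deltaOp T₁ T₂ X p v.2, (aeval T₂ p) v.2) := by
  induction p using Polynomial.induction_on' with
  | add p q hp hq =>
    rw [map_add, ContinuousLinearMap.add_apply, hp, hq, deltaOp_add]
    refine Prod.ext ?_ ?_
    · simp only [Prod.fst_add, Prod.mk_add_mk, map_add, ContinuousLinearMap.add_apply]
      abel
    · simp
  | monomial n a =>
    rw [← Polynomial.smul_X_eq_monomial, map_smul, map_smul, map_smul, deltaOp_smul,
      ContinuousLinearMap.smul_apply, ContinuousLinearMap.smul_apply,
      ContinuousLinearMap.smul_apply, Polynomial.aeval_X_pow, Rop_pow_apply]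
    refine Prod.ext ?_ ?_ <;> simp [smul_add]

lemma deltaOp_X_pow (k : ℕ) :
    deltaOp T₁ T₂ X (Polynomial.X ^ k)
      = ∑ j ∈ range k, (T₁ ^ j).comp (X.comp (T₂ ^ (k - 1 - j))) := by
  induction k with
  | zero => ext y; simp [deltaOp_apply]
  | succ k ih =>
    have step : deltaOp T₁ T₂ X (Polynomial.X ^ (k + 1))
        = ((T₁ ^ k).comp X) + (deltaOp T₁ T₂ X (Polynomial.X ^ k)).comp T₂ := by
      ext y
      rw [deltaOp_apply, Polynomial.aeval_X_pow, pow_succ,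
        ContinuousLinearMap.mul_apply, Rop_apply, Rop_pow_apply]
      simp [deltaOp_apply]
    rw [step, ih, Finset.sum_range_succ, ContinuousLinearMap.finset_sum_comp]
    rw [add_comm]
    congr 1
    · refine Finset.sum_congr rfl fun j hj => ?_
      rw [ContinuousLinearMap.comp_assoc, ContinuousLinearMap.comp_assoc]
      congr 2
      rw [← ContinuousLinearMap.mul_def, ← pow_succ]
      congr 1
      have := Finset.mem_range.mp hj
      omega
    · simp [ContinuousLinearMap.one_def]

lemma deltaOp_eq (p : Polynomial ℂ) :
    deltaOp T₁ T₂ X p = ∑ j ∈ range p.natDegree, (T₁ ^ j).comp (X.comp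
      (aeval T₂ (∑ k ∈ Finset.Icc (j + 1) p.natDegree,
        Polynomial.C (p.coeff k) * Polynomial.X ^ (k - 1 - j)))) := by
  set d := p.natDegree with hd
  have hrw : deltaOp T₁ T₂ X p
      = ∑ i ∈ range (d + 1), p.coeff i • deltaOp T₁ T₂ X (Polynomial.X ^ i) := by
    conv_lhs => rw [show deltaOp T₁ T₂ X p = deltaLin T₁ T₂ X p from rfl,
      p.as_sum_range' (d + 1) (lt_add_one _)]
    rw [map_sum]
    refine Finset.sum_congr rfl fun i _ => ?_
    rw [← Polynomial.smul_X_eq_monomial, map_smul]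
    rfl
  rw [hrw]
  have lhs_eq : ∑ i ∈ range (d + 1), p.coeff i • deltaOp T₁ T₂ X (Polynomial.X ^ i)
      = ∑ i ∈ range (d + 1), ∑ j ∈ range i,
          p.coeff i • ((T₁ ^ j).comp (X.comp (T₂ ^ (i - 1 - j)))) := by
    refine Finset.sum_congr rfl fun i _ => ?_
    rw [deltaOp_X_pow, Finset.smul_sum]
  rw [lhs_eq]
  rw [Finset.sum_comm' (t' := range d) (s' := fun j => Finset.Icc (j + 1) d)
    (by intro i j; simp only [Finset.mem_range, Finset.mem_Icc]; omega)]
  refine Finset.sum_congr rfl fun j hj => ?_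
  rw [map_sum, ContinuousLinearMap.comp_finset_sum, ContinuousLinearMap.comp_finset_sum]
  refine Finset.sum_congr rfl fun k hk => ?_
  rw [map_mul, Polynomial.aeval_C, Polynomial.aeval_X_pow]
  rw [Algebra.algebraMap_eq_smul_one, smul_mul_assoc, one_mul,
    ContinuousLinearMap.comp_smul, ContinuousLinearMap.comp_smul]

lemma deltaOp_norm_le (hT₁ : ‖T₁‖ < 1) (C₂ : ℝ) (hC₂0 : 0 ≤ C₂)
    (hC₂ : ∀ (p : Polynomial ℂ) (B : ℝ),
      (∀ z : ℂ, ‖z‖ ≤ 1 → ‖Polynomial.eval z p‖ ≤ B) →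
      ‖(Polynomial.aeval T₂ p : H₂ →L[ℂ] H₂)‖ ≤ C₂ * B)
    (p : Polynomial ℂ) (B : ℝ)
    (hB : ∀ z : ℂ, ‖z‖ ≤ 1 → ‖Polynomial.eval z p‖ ≤ B) :
    ‖deltaOp T₁ T₂ X p‖
      ≤ (∑' j : ℕ, ((j : ℝ) + 2) * ‖T₁‖ ^ j) * (C₂ * (‖X‖ * B)) := by
  have hB0 : 0 ≤ B := (norm_nonneg _).trans (hB 0 (by simp))
  have hKnn : 0 ≤ C₂ * (‖X‖ * B) := mul_nonneg hC₂0 (mul_nonneg (norm_nonneg _) hB0)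
  rw [deltaOp_eq]
  have key : ∀ j ∈ range p.natDegree,
      ‖(T₁ ^ j).comp (X.comp (aeval T₂ (∑ k ∈ Finset.Icc (j + 1) p.natDegree,
          Polynomial.C (p.coeff k) * Polynomial.X ^ (k - 1 - j))))‖
        ≤ (((j : ℝ) + 2) * ‖T₁‖ ^ j) * (C₂ * (‖X‖ * B)) := by
    intro j hj
    have h1 : ‖(aeval T₂ (∑ k ∈ Finset.Icc (j + 1) p.natDegree,
        Polynomial.C (p.coeff k) * Polynomial.X ^ (k - 1 - j)) : H₂ →L[ℂ] H₂)‖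
        ≤ C₂ * (((j : ℝ) + 2) * B) :=
      hC₂ _ _ (Pi_eval_bound p B hB j (Finset.mem_range.mp hj).le)
    calc ‖(T₁ ^ j).comp (X.comp (aeval T₂ _))‖
        ≤ ‖T₁ ^ j‖ * ‖X.comp (aeval T₂ _ : H₂ →L[ℂ] H₂)‖ :=
          ContinuousLinearMap.opNorm_comp_le _ _
      _ ≤ ‖T₁ ^ j‖ * (‖X‖ * ‖(aeval T₂ _ : H₂ →L[ℂ] H₂)‖) :=
          mul_le_mul_of_nonneg_left (ContinuousLinearMap.opNorm_comp_le _ _) (norm_nonneg _)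
      _ ≤ ‖T₁‖ ^ j * (‖X‖ * (C₂ * (((j : ℝ) + 2) * B))) :=
          mul_le_mul (pow_opNorm_le T₁ j)
            (mul_le_mul_of_nonneg_left h1 (norm_nonneg X))
            (mul_nonneg (norm_nonneg _) (norm_nonneg _)) (by positivity)
      _ = (((j : ℝ) + 2) * ‖T₁‖ ^ j) * (C₂ * (‖X‖ * B)) := by ring
  refine (norm_sum_le _ _).trans ?_
  refine (Finset.sum_le_sum key).trans ?_
  rw [← Finset.sum_mul]
  refine mul_le_mul_of_nonneg_right ?_ hKnn
  exact Summable.sum_le_tsum _ (fun i _ => by positivity) (summ_aux (norm_nonneg T₁) hT₁)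

lemma aeval_T1_norm_le (hT₁ : ‖T₁‖ < 1) (p : Polynomial ℂ) (B : ℝ)
    (hB : ∀ z : ℂ, ‖z‖ ≤ 1 → ‖Polynomial.eval z p‖ ≤ B) :
    ‖(aeval T₁ p : H₁ →L[ℂ] H₁)‖ ≤ (1 - ‖T₁‖)⁻¹ * B := by
  have hB0 : 0 ≤ B := (norm_nonneg _).trans (hB 0 (by simp))
  have hrep : (aeval T₁ p : H₁ →L[ℂ] H₁)
      = ∑ i ∈ range (p.natDegree + 1), p.coeff i • T₁ ^ i := by
    conv_lhs => rw [p.as_sum_range' (p.natDegree + 1) (lt_add_one _)]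
    rw [map_sum]
    refine Finset.sum_congr rfl fun i _ => ?_
    rw [← Polynomial.smul_X_eq_monomial, map_smul, Polynomial.aeval_X_pow]
  rw [hrep]
  refine (norm_sum_le _ _).trans ?_
  have hterm : ∀ i ∈ range (p.natDegree + 1), ‖p.coeff i • T₁ ^ i‖ ≤ B * ‖T₁‖ ^ i := by
    intro i _
    rw [norm_smul (p.coeff i) (T₁ ^ i)]
    exact mul_le_mul (coeff_norm_le_aux p B hB i) (pow_opNorm_le T₁ i) (norm_nonneg _) hB0
  refine (Finset.sum_le_sum hterm).trans ?_
  rw [← Finset.mul_sum, mul_comm ((1 - ‖T₁‖)⁻¹) B]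
  refine mul_le_mul_of_nonneg_left ?_ hB0
  have hsum : ∑ i ∈ range (p.natDegree + 1), ‖T₁‖ ^ i ≤ ∑' i : ℕ, ‖T₁‖ ^ i :=
    Summable.sum_le_tsum _ (fun i _ => by positivity)
      (summable_geometric_of_lt_one (norm_nonneg T₁) hT₁)
  rwa [tsum_geometric_of_lt_one (norm_nonneg T₁) hT₁] at hsum

lemma Rop_polyBounded (hT₁ : ‖T₁‖ < 1) (C₂ : ℝ) (hC₂pos : 0 < C₂)
    (hC₂ : ∀ (p : Polynomial ℂ) (B : ℝ),
      (∀ z : ℂ, ‖z‖ ≤ 1 → ‖Polynomial.eval z p‖ ≤ B) →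
      ‖(Polynomial.aeval T₂ p : H₂ →L[ℂ] H₂)‖ ≤ C₂ * B) :
    PolynomiallyBounded (Rop T₁ T₂ X) := by
  set r := ‖T₁‖ with hr
  have hr0 : 0 ≤ r := norm_nonneg _
  have hinv : 0 < (1 - r)⁻¹ := inv_pos.mpr (by linarith)
  set M₀ : ℝ := ∑' j : ℕ, ((j : ℝ) + 2) * r ^ j with hM₀
  have hM₀0 : 0 ≤ M₀ := tsum_nonneg fun j => by positivity
  refine ⟨(1 - r)⁻¹ + M₀ * (C₂ * ‖X‖) + C₂, by positivity, fun p B hB => ?_⟩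
  have hB0 : 0 ≤ B := (norm_nonneg _).trans (hB 0 (by simp))
  have h1 := aeval_T1_norm_le T₁ hT₁ p B hB
  have h2 := deltaOp_norm_le T₁ T₂ X hT₁ C₂ hC₂pos.le hC₂ p B hB
  have h3 := hC₂ p B hB
  refine ContinuousLinearMap.opNorm_le_bound _ (by positivity) fun v => ?_
  rw [aeval_Rop_apply]
  rw [Prod.norm_def]
  refine max_le ?_ ?_
  · have e1 : ‖(aeval T₁ p : H₁ →L[ℂ] H₁) v.1‖ ≤ ((1 - r)⁻¹ * B) * ‖v‖ :=
      ((aeval T₁ p : H₁ →L[ℂ] H₁).le_opNorm v.1).trans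
        (mul_le_mul h1 (norm_fst_le v) (norm_nonneg _) (by positivity))
    have e2 : ‖deltaOp T₁ T₂ X p v.2‖ ≤ (M₀ * (C₂ * (‖X‖ * B))) * ‖v‖ :=
      ((deltaOp T₁ T₂ X p).le_opNorm v.2).trans
        (mul_le_mul h2 (norm_snd_le v)
          (norm_nonneg _) (by positivity))
    refine (norm_add_le _ _).trans ?_
    have hnn : 0 ≤ C₂ * B * ‖v‖ := by positivity
    calc ‖(aeval T₁ p : H₁ →L[ℂ] H₁) v.1‖ + ‖deltaOp T₁ T₂ X p v.2‖
        ≤ ((1 - r)⁻¹ * B) * ‖v‖ + (M₀ * (C₂ * (‖X‖ * B))) * ‖v‖ := add_le_add e1 e2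
      _ ≤ ((1 - r)⁻¹ + M₀ * (C₂ * ‖X‖) + C₂) * B * ‖v‖ := by nlinarith [hnn]
  · have e3 : ‖(aeval T₂ p : H₂ →L[ℂ] H₂) v.2‖ ≤ (C₂ * B) * ‖v‖ :=
      ((aeval T₂ p : H₂ →L[ℂ] H₂).le_opNorm v.2).trans
        (mul_le_mul h3 (norm_snd_le v) (norm_nonneg _)
          (mul_nonneg hC₂pos.le hB0))
    refine e3.trans ?_
    have hnn2 : 0 ≤ ((1 - r)⁻¹ + M₀ * (C₂ * ‖X‖)) * (B * ‖v‖) := by positivity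
    nlinarith [hnn2]

end Struct

/-- If `‖T₁‖ < 1` and `T₂` is polynomially bounded (with constant `C₂`), then for every
bounded `X` the block operator `R = [[T₁, X], [0, T₂]]` is polynomially bounded; the
off-diagonal block of `p(R)` equals `δ_X(p) = Σ_{j<d} T₁^j X Π_j(T₂)` with
`Π_j(z) = Σ_{k=j+1}^d a_k z^{k-1-j}`, and
`‖δ_X(p)‖ ≤ (Σ_j (1+log(j+1))‖T₁‖^j) C₂ M ‖X‖ ‖p‖_∞` for a suitable constant `M`. -/
theorem stmt_11 {H₁ H₂ : Type*}
    [NormedAddCommGroup H₁] [InnerProductSpace ℂ H₁] [CompleteSpace H₁]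
    [NormedAddCommGroup H₂] [InnerProductSpace ℂ H₂] [CompleteSpace H₂]
    (T₁ : H₁ →L[ℂ] H₁) (T₂ : H₂ →L[ℂ] H₂) (hT₁ : ‖T₁‖ < 1)
    (C₂ : ℝ) (hC₂pos : 0 < C₂)
    (hC₂ : ∀ (p : Polynomial ℂ) (B : ℝ),
      (∀ z : ℂ, ‖z‖ ≤ 1 → ‖Polynomial.eval z p‖ ≤ B) →
      ‖(Polynomial.aeval T₂ p : H₂ →L[ℂ] H₂)‖ ≤ C₂ * B)
    (X : H₂ →L[ℂ] H₁) :
    letI R : (H₁ × H₂) →L[ℂ] (H₁ × H₂) :=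
      ((T₁.comp (ContinuousLinearMap.fst ℂ H₁ H₂) +
          X.comp (ContinuousLinearMap.snd ℂ H₁ H₂))).prod
        (T₂.comp (ContinuousLinearMap.snd ℂ H₁ H₂))
    letI delta : Polynomial ℂ → (H₂ →L[ℂ] H₁) := fun p =>
      (ContinuousLinearMap.fst ℂ H₁ H₂).comp
        ((Polynomial.aeval R p : (H₁ × H₂) →L[ℂ] (H₁ × H₂)).comp
          (ContinuousLinearMap.inr ℂ H₁ H₂))
    PolynomiallyBounded R ∧
    (∀ p : Polynomial ℂ, delta p =
      ∑ j ∈ Finset.range p.natDegree,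
        (T₁ ^ j).comp (X.comp
          (Polynomial.aeval T₂
            (∑ k ∈ Finset.Icc (j + 1) p.natDegree,
              Polynomial.C (p.coeff k) * Polynomial.X ^ (k - 1 - j)) : H₂ →L[ℂ] H₂))) ∧
    ∃ M > (0 : ℝ), ∀ (p : Polynomial ℂ) (B : ℝ),
      (∀ z : ℂ, ‖z‖ ≤ 1 → ‖Polynomial.eval z p‖ ≤ B) →
      ‖delta p‖ ≤
        (∑' j : ℕ, (1 + Real.log (j + 1)) * ‖T₁‖ ^ j) * C₂ * M * ‖X‖ * B := by
  set r := ‖T₁‖ with hr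
  have hr0 : 0 ≤ r := norm_nonneg _
  set M₀ : ℝ := ∑' j : ℕ, ((j : ℝ) + 2) * r ^ j with hM₀
  have hsum0 : Summable (fun j : ℕ => ((j : ℝ) + 2) * r ^ j) := summ_aux hr0 hT₁
  have hterm_nonneg : ∀ j : ℕ, 0 ≤ (1 + Real.log ((j : ℝ) + 1)) * r ^ j := by
    intro j
    have hlog : 0 ≤ Real.log ((j : ℝ) + 1) := Real.log_nonneg (by linarith [Nat.cast_nonneg (α := ℝ) j])
    positivity
  have hsum2 : Summable (fun j : ℕ => (1 + Real.log ((j : ℝ) + 1)) * r ^ j) := by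
    refine Summable.of_nonneg_of_le hterm_nonneg (fun j => ?_) hsum0
    have hlog2 : Real.log ((j : ℝ) + 1) ≤ (j : ℝ) := by
      have := Real.log_le_sub_one_of_pos (show (0 : ℝ) < (j : ℝ) + 1 by positivity)
      linarith
    have : (1 + Real.log ((j : ℝ) + 1)) ≤ (j : ℝ) + 2 := by linarith
    exact mul_le_mul_of_nonneg_right this (by positivity)
  have hS1 : 1 ≤ ∑' j : ℕ, (1 + Real.log ((j : ℝ) + 1)) * r ^ j := by
    have h := Summable.le_tsum hsum2 0 (fun j _ => hterm_nonneg j)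
    simpa using h
  have hM₀pos : 0 < M₀ := by
    have h := Summable.le_tsum hsum0 0 (fun j _ => by positivity)
    simp only [Nat.cast_zero, zero_add, pow_zero, mul_one] at h
    linarith
  refine ⟨Rop_polyBounded T₁ T₂ X hT₁ C₂ hC₂pos hC₂,
    fun p => deltaOp_eq T₁ T₂ X p, M₀, hM₀pos, fun p B hB => ?_⟩
  have hB0 : 0 ≤ B := (norm_nonneg _).trans (hB 0 (by simp))
  have h2 := deltaOp_norm_le T₁ T₂ X hT₁ C₂ hC₂pos.le hC₂ p B hB
  have hnn : 0 ≤ C₂ * M₀ * ‖X‖ * B := by positivity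
  calc ‖deltaOp T₁ T₂ X p‖ ≤ M₀ * (C₂ * (‖X‖ * B)) := h2
    _ = 1 * (C₂ * M₀ * ‖X‖ * B) := by ring
    _ ≤ (∑' j : ℕ, (1 + Real.log ((j : ℝ) + 1)) * r ^ j) * (C₂ * M₀ * ‖X‖ * B) :=
        mul_le_mul_of_nonneg_right hS1 hnn
    _ = (∑' j : ℕ, (1 + Real.log ((j : ℝ) + 1)) * r ^ j) * C₂ * M₀ * ‖X‖ * B := by ring
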